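/- Let w = (d₁,…,d_l,…,d_N) and w̃ = (d₁,…,d̃_l,…,d_N) with d̃_l ≤ d_l (all other entries equal), and let μ and μ̃ be the reflector measures of the discrete reflectors σ_w and σ_{w̃} respectively. Then μ̃(P_i) ≤ μ(P_i) for every i ≠ l. -/

import Mathlib

noncomputable section

open MeasureTheory Metric Set Filter Topology
attribute [local instance] Classical.propDecidable

/-- Real inner product on `ℝ³`. -/
noncomputable def rinner (x y : EuclideanSpace ℝ (Fin 3)) : ℝ := inner ℝ x y

/-- Euclidean 3-space. -/
abbrev E3 : Type := EuclideanSpace ℝ (Fin 3)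

/-- The unit sphere `S²` in `ℝ³`. -/
def sphere2 : Set E3 := Metric.sphere (0 : E3) 1

/-- Unit vector `m = P/OP` in the direction of `P`. -/
noncomputable def axisDir (P : E3) : E3 := ‖P‖⁻¹ • P

/-- Eccentricity `ε = √(1 + d²/OP²) − d/OP` of the ellipsoid `E_d(P)`. -/
noncomputable def ecc (P : E3) (d : ℝ) : ℝ :=
  Real.sqrt (1 + d ^ 2 / ‖P‖ ^ 2) - d / ‖P‖

/-- Polar radius `ρ_d(x) = d/(1 − ε x·m)` of the ellipsoid `E_d(P)`. -/
noncomputable def polarRadius (P : E3) (d : ℝ) (x : E3) : ℝ :=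
  d / (1 - ecc P d * rinner x (axisDir P))

/-- The constant `c_δ = √(1 + δ²) − δ`. -/
noncomputable def cconst (δ : ℝ) : ℝ := Real.sqrt (1 + δ ^ 2) - δ

/-- Outer unit normal `(x − εm)/|x − εm|` of the ellipsoid `E_d(P)` at the point `ρ_d(x)x`. -/
noncomputable def normalVec (P : E3) (d : ℝ) (x : E3) : E3 :=
  ‖x - ecc P d • axisDir P‖⁻¹ • (x - ecc P d • axisDir P)

/-- The ellipsoid `E_d(P)` supports the surface `{ρ(x)x : x ∈ closure Ω}` at `ρ(x₀)x₀`. -/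
def IsSupportingAt (Ω : Set E3) (ρ : E3 → ℝ) (P : E3) (d : ℝ) (x₀ : E3) : Prop :=
  P ≠ 0 ∧ 0 < d ∧ (∀ x ∈ closure Ω, ρ x ≤ polarRadius P d x) ∧
    ρ x₀ = polarRadius P d x₀

/-- `{ρ(x)x : x ∈ closure Ω}` is a reflector from `closure Ω` to the target `D`. -/
def IsReflector (Ω D : Set E3) (ρ : E3 → ℝ) : Prop :=
  (∀ x ∈ closure Ω, 0 < ρ x) ∧
  ∀ x₀ ∈ closure Ω, ∃ P ∈ D, ∃ d : ℝ, IsSupportingAt Ω ρ P d x₀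

/-- Tracing set `τ_σ(E)`: directions reflected into `E`. -/
def tracing (Ω : Set E3) (ρ : E3 → ℝ) (E : Set E3) : Set E3 :=
  {x | x ∈ closure Ω ∧ ∃ P ∈ E, ∃ d : ℝ, IsSupportingAt Ω ρ P d x}

/-- The class `A(δ)`: reflectors all of whose points admit a supporting ellipsoid with
`d ≥ δ M`. -/
def InClassA (Ω D : Set E3) (ρ : E3 → ℝ) (δ M : ℝ) : Prop :=
  IsReflector Ω D ρ ∧
  ∀ x₀ ∈ closure Ω, ∃ P ∈ D, ∃ d : ℝ, δ * M ≤ d ∧ IsSupportingAt Ω ρ P d x₀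

/-- The boundary `∂Ω` of `Ω` relative to the sphere `S²`. -/
def sphFrontier (Ω : Set E3) : Set E3 := closure Ω ∩ closure (sphere2 \ Ω)

/-- `D` is contained in a plane of `ℝ³`. -/
def InPlane (D : Set E3) : Prop :=
  ∃ v : E3, v ≠ 0 ∧ ∃ c : ℝ, ∀ P ∈ D, rinner P v = c

/-- The set `S` of directions traced to two distinct target points. -/
def ambigSet (Ω D : Set E3) (ρ : E3 → ℝ) : Set E3 :=
  {x | x ∈ closure Ω ∧ ∃ P₁ ∈ D, ∃ P₂ ∈ D, P₁ ≠ P₂ ∧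
    x ∈ tracing Ω ρ {P₁} ∧ x ∈ tracing Ω ρ {P₂}}

/-- A canonical selection of the outer unit normal `ν(x)` of the reflector; at every point
where the supporting ellipsoid is unique (a.e. point) this is the normal of the
supporting ellipsoid. -/
noncomputable def nuSel (Ω D : Set E3) (ρ : E3 → ℝ) (x : E3) : E3 :=
  if h : ∃ p : E3 × ℝ, p.1 ∈ D ∧ IsSupportingAt Ω ρ p.1 p.2 x then
    normalVec h.choose.1 h.choose.2 x
  else 0

/-- A canonical selection of the reflector map `𝒩_σ(x)`; at every point with a unique
supporting ellipsoid (a.e. point) this is the target point the ray `x` is reflected to. -/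
noncomputable def reflMapSel (Ω D : Set E3) (ρ : E3 → ℝ) (x : E3) : E3 :=
  if h : ∃ p : E3 × ℝ, p.1 ∈ D ∧ IsSupportingAt Ω ρ p.1 p.2 x then h.choose.1 else 0

/-- The reflector measure `μ(E) = ∫_{τ_σ(E)} f(x) (x·ν(x))/ρ(x)² dx`,
the irradiance received on `E ⊆ D`. -/
noncomputable def reflMeasure (Ω D : Set E3) (ρ f : E3 → ℝ) (E : Set E3) : ℝ :=
  ∫ x in tracing Ω ρ E, f x * rinner x (nuSel Ω D ρ x) / ρ x ^ 2 ∂μH[2]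

/-- Polar radius of the discrete reflector given by `w = (d₁,…,d_N)`:
`ρ_w(x) = min_i ρ_{d_i}(x)`. -/
noncomputable def discRho {N : ℕ} (P : Fin N → E3) (w : Fin N → ℝ) (x : E3) : ℝ :=
  ⨅ i, polarRadius (P i) (w i) x

/-- Tracing set of the discrete reflector: directions reflected to some `P_i`, `i ∈ I`. -/
def discTracing {N : ℕ} (Ω : Set E3) (P : Fin N → E3) (w : Fin N → ℝ)
    (I : Set (Fin N)) : Set E3 :=
  {x | x ∈ closure Ω ∧ ∃ i ∈ I, discRho P w x = polarRadius (P i) (w i) x}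

/-- Canonical selection of the outer unit normal of the discrete reflector; at every
point where the minimum is attained at a unique `i` (a.e. point) it is the normal of
the supporting ellipsoid `E_{d_i}(P_i)`. -/
noncomputable def discNu {N : ℕ} (P : Fin N → E3) (w : Fin N → ℝ) (x : E3) : E3 :=
  if h : ∃ i, discRho P w x = polarRadius (P i) (w i) x then
    normalVec (P h.choose) (w h.choose) x
  else 0

/-- Reflector measure of the discrete reflector:
`μ_w({P_i : i ∈ I}) = ∫_{τ_{σ_w}(I)} f(x)(x·ν_w(x))/ρ_w(x)² dx`. -/
noncomputable def discMu {N : ℕ} (Ω : Set E3) (P : Fin N → E3) (w : Fin N → ℝ)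
    (f : E3 → ℝ) (I : Set (Fin N)) : ℝ :=
  ∫ x in discTracing Ω P w I, f x * rinner x (discNu P w x) / discRho P w x ^ 2 ∂μH[2]

theorem key_ineq (q q' : ℝ) (h0 : 0 < q') (h1 : q' ≤ q) :
    0 ≤ q * Real.sqrt (1+q'^2) - q' * Real.sqrt (1+q^2) ∧
    q * Real.sqrt (1+q'^2) - q' * Real.sqrt (1+q^2) ≤ q - q' := by
  set a := Real.sqrt (1+q^2) with hadef
  set b := Real.sqrt (1+q'^2) with hbdef
  have ha : a ^ 2 = 1 + q^2 := Real.sq_sqrt (by positivity)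
  have hb : b ^ 2 = 1 + q'^2 := Real.sq_sqrt (by positivity)
  have ha1 : 1 ≤ a := by nlinarith [Real.sqrt_nonneg (1+q^2)]
  have hb1 : 1 ≤ b := by nlinarith [Real.sqrt_nonneg (1+q'^2)]
  have hq : 0 < q := lt_of_lt_of_le h0 h1
  have key : (q*b - q'*a)*(q*b+q'*a) = (q-q')*(q+q') := by
    have : (q*b)^2 - (q'*a)^2 = (q-q')*(q+q') := by rw [mul_pow, mul_pow, ha, hb]; ring
    nlinarith [this]
  have hS : q + q' ≤ q*b + q'*a := by nlinarith
  have hSpos : 0 < q*b + q'*a := by nlinarith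
  exact ⟨by nlinarith, by nlinarith⟩

theorem ecc_eq (P : E3) (d : ℝ) : ecc P d = Real.sqrt (1 + (d/‖P‖)^2) - d/‖P‖ := by
  rw [ecc, div_pow]

theorem ecc_pos (P : E3) (d : ℝ) (hP : P ≠ 0) (hd : 0 < d) : 0 < ecc P d := by
  have hr : 0 < ‖P‖ := norm_pos_iff.mpr hP
  have hq : 0 < d / ‖P‖ := div_pos hd hr
  rw [ecc_eq]
  have h : (d/‖P‖)^2 < Real.sqrt (1 + (d/‖P‖)^2) ^ 2 := by
    rw [Real.sq_sqrt (by positivity)]; linarith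
  nlinarith [Real.sqrt_nonneg (1 + (d/‖P‖)^2)]

theorem ecc_lt_one (P : E3) (d : ℝ) (hP : P ≠ 0) (hd : 0 < d) : ecc P d < 1 := by
  have hr : 0 < ‖P‖ := norm_pos_iff.mpr hP
  have hq : 0 < d / ‖P‖ := div_pos hd hr
  rw [ecc_eq]
  have h : Real.sqrt (1 + (d/‖P‖)^2) ^ 2 < (1 + d/‖P‖)^2 := by
    rw [Real.sq_sqrt (by positivity)]; nlinarith
  nlinarith [Real.sqrt_nonneg (1 + (d/‖P‖)^2)]

theorem ecc_identity (P : E3) (d : ℝ) (hP : P ≠ 0) (hd : 0 < d) :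
    ecc P d ^ 2 + 2 * ecc P d * (d / ‖P‖) = 1 := by
  rw [ecc_eq]
  have h : Real.sqrt (1 + (d/‖P‖)^2) ^ 2 = 1 + (d/‖P‖)^2 := Real.sq_sqrt (by positivity)
  nlinarith [h]

theorem norm_axisDir (P : E3) (hP : P ≠ 0) : ‖axisDir P‖ = 1 := by
  rw [axisDir, norm_smul, norm_inv, norm_norm,
    inv_mul_cancel₀ (norm_ne_zero_iff.mpr hP)]

theorem abs_rinner_axisDir_le (P x : E3) (hP : P ≠ 0) (hx : ‖x‖ = 1) :
    |rinner x (axisDir P)| ≤ 1 := by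
  have := abs_real_inner_le_norm x (axisDir P)
  rw [hx, norm_axisDir P hP, one_mul] at this
  exact this

theorem denom_pos (P : E3) (d : ℝ) (x : E3) (hP : P ≠ 0) (hd : 0 < d) (hx : ‖x‖ = 1) :
    0 < 1 - ecc P d * rinner x (axisDir P) := by
  have h1 := abs_rinner_axisDir_le P x hP hx
  have h2 := ecc_pos P d hP hd
  have h3 := ecc_lt_one P d hP hd
  have := abs_le.mp h1
  nlinarith

theorem denom_lt_two (P : E3) (d : ℝ) (x : E3) (hP : P ≠ 0) (hd : 0 < d) (hx : ‖x‖ = 1) :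
    1 - ecc P d * rinner x (axisDir P) < 2 := by
  have h1 := abs_rinner_axisDir_le P x hP hx
  have h2 := ecc_pos P d hP hd
  have h3 := ecc_lt_one P d hP hd
  have := abs_le.mp h1
  nlinarith

theorem polarRadius_pos (P : E3) (d : ℝ) (x : E3) (hP : P ≠ 0) (hd : 0 < d) (hx : ‖x‖ = 1) :
    0 < polarRadius P d x :=
  div_pos hd (denom_pos P d x hP hd hx)

theorem polarRadius_half (P : E3) (d : ℝ) (x : E3) (hP : P ≠ 0) (hd : 0 < d) (hx : ‖x‖ = 1) :
    d / 2 < polarRadius P d x := by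
  rw [polarRadius]
  exact div_lt_div_of_pos_left hd (denom_pos P d x hP hd hx) (denom_lt_two P d x hP hd hx)

theorem mono_core (q q' t : ℝ) (h0 : 0 < q') (h1 : q' ≤ q) (ht : |t| ≤ 1) :
    q' * (1 - (Real.sqrt (1+q^2) - q) * t) ≤ q * (1 - (Real.sqrt (1+q'^2) - q') * t) := by
  obtain ⟨K1, K2⟩ := key_ineq q q' h0 h1
  have ht' := abs_le.mp ht
  nlinarith [mul_nonneg K1 (by linarith : (0:ℝ) ≤ 1 - t)]

theorem polarRadius_mono (P : E3) (d d' : ℝ) (x : E3) (hP : P ≠ 0) (hd' : 0 < d')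
    (hdd : d' ≤ d) (hx : ‖x‖ = 1) : polarRadius P d' x ≤ polarRadius P d x := by
  have hd : 0 < d := lt_of_lt_of_le hd' hdd
  have h1 := denom_pos P d x hP hd hx
  have h2 := denom_pos P d' x hP hd' hx
  have hr : 0 < ‖P‖ := norm_pos_iff.mpr hP
  rw [polarRadius, polarRadius, div_le_div_iff₀ h2 h1]
  set t := rinner x (axisDir P) with htdef
  have H := mono_core (d/‖P‖) (d'/‖P‖) t (div_pos hd' hr) (by gcongr)
    (abs_rinner_axisDir_le P x hP hx)
  have HH := mul_le_mul_of_nonneg_left H hr.le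
  have c1 : d/‖P‖ * ‖P‖ = d := div_mul_cancel₀ d (ne_of_gt hr)
  have c2 : d'/‖P‖ * ‖P‖ = d' := div_mul_cancel₀ d' (ne_of_gt hr)
  rw [ecc_eq P d] at h1 ⊢
  rw [ecc_eq P d'] at h2 ⊢
  nlinarith [HH, c1, c2, h1, h2]
theorem rinner_self (x : E3) : rinner x x = ‖x‖^2 := by
  rw [rinner, real_inner_self_eq_norm_sq]

theorem sub_ecc_ne_zero (P : E3) (d : ℝ) (x : E3) (hP : P ≠ 0) (hd : 0 < d) (hx : ‖x‖ = 1) :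
    x - ecc P d • axisDir P ≠ 0 := by
  intro h
  have hxe : x = ecc P d • axisDir P := by rwa [sub_eq_zero] at h
  have : ‖x‖ = |ecc P d| := by
    rw [hxe, norm_smul, norm_axisDir P hP, mul_one, Real.norm_eq_abs]
  rw [hx, abs_of_pos (ecc_pos P d hP hd)] at this
  exact absurd this.symm (ne_of_lt (ecc_lt_one P d hP hd))

theorem norm_normalVec_le_one (P : E3) (d : ℝ) (x : E3) : ‖normalVec P d x‖ ≤ 1 := by
  rw [normalVec, norm_smul, norm_inv, norm_norm]
  rcases eq_or_ne (x - ecc P d • axisDir P) 0 with h | h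
  · simp [h]
  · rw [inv_mul_cancel₀ (norm_ne_zero_iff.mpr h)]

theorem rinner_normalVec_eq (P : E3) (d : ℝ) (x : E3) :
    rinner x (normalVec P d x)
      = ‖x - ecc P d • axisDir P‖⁻¹ * (rinner x x - ecc P d * rinner x (axisDir P)) := by
  rw [normalVec, rinner, rinner, rinner, real_inner_smul_right, inner_sub_right,
    real_inner_smul_right]

theorem rinner_normalVec_nonneg (P : E3) (d : ℝ) (x : E3) (hP : P ≠ 0) (hd : 0 < d)
    (hx : ‖x‖ = 1) : 0 ≤ rinner x (normalVec P d x) := by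
  rw [rinner_normalVec_eq, rinner_self, hx]
  have h := denom_pos P d x hP hd hx
  exact mul_nonneg (inv_nonneg.mpr (norm_nonneg _)) (by nlinarith)

theorem abs_rinner_normalVec_le_one (P : E3) (d : ℝ) (x : E3) (hx : ‖x‖ = 1) :
    |rinner x (normalVec P d x)| ≤ 1 := by
  have := abs_real_inner_le_norm x (normalVec P d x)
  rw [hx, one_mul] at this
  exact this.trans (norm_normalVec_le_one P d x)

theorem continuous_rinner_right (y : E3) : Continuous fun x : E3 => rinner x y := by
  simpa [rinner] using continuous_id.inner (𝕜 := ℝ) (continuous_const : Continuous fun _ : E3 => y)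

theorem measurable_polarRadius (P : E3) (d : ℝ) : Measurable (polarRadius P d) := by
  unfold polarRadius
  exact measurable_const.div
    ((measurable_const.sub ((continuous_rinner_right (axisDir P)).measurable.const_mul _)))

theorem measurable_rinner_normalVec (P : E3) (d : ℝ) :
    Measurable fun x => rinner x (normalVec P d x) := by
  have : (fun x => rinner x (normalVec P d x)) = fun x =>
      ‖x - ecc P d • axisDir P‖⁻¹ * (rinner x x - ecc P d * rinner x (axisDir P)) := by
    funext x; exact rinner_normalVec_eq P d x
  rw [this]
  have h1 : Continuous fun x : E3 => ‖x - ecc P d • axisDir P‖ :=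
    (continuous_id.sub continuous_const).norm
  have h2 : Continuous fun x : E3 => rinner x x := by
    simpa [rinner] using continuous_id.inner (𝕜 := ℝ) (continuous_id : Continuous fun x : E3 => x)
  exact (h1.measurable.inv).mul
    (h2.measurable.sub (((continuous_rinner_right (axisDir P)).measurable.const_mul _)))

theorem measurable_finset_inf' {ι : Type*} (s : Finset ι) (hs : s.Nonempty) (g : ι → E3 → ℝ)
    (hg : ∀ j, Measurable (g j)) : Measurable fun x => s.inf' hs fun j => g j x := by
  induction hs using Finset.Nonempty.cons_induction with
  | singleton a => simp only [Finset.inf'_singleton]; exact hg a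
  | cons a s ha hs ih =>
      simp only [Finset.inf'_cons (H := hs)]
      exact Measurable.min (hg a) ih

theorem discRho_le {N : ℕ} (P : Fin N → E3) (v : Fin N → ℝ) (x : E3) (j : Fin N) :
    discRho P v x ≤ polarRadius (P j) (v j) x :=
  ciInf_le (Set.finite_range _).bddBelow j

theorem discRho_attained {N : ℕ} (P : Fin N → E3) (v : Fin N → ℝ) (x : E3) (j₀ : Fin N) :
    ∃ j, discRho P v x = polarRadius (P j) (v j) x := by
  have : Nonempty (Fin N) := ⟨j₀⟩
  obtain ⟨j, hj⟩ := Finite.exists_min fun j => polarRadius (P j) (v j) x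
  exact ⟨j, le_antisymm (discRho_le P v x j) (le_ciInf hj)⟩

theorem discRho_eq_inf' {N : ℕ} (P : Fin N → E3) (v : Fin N → ℝ) (x : E3) (j₀ : Fin N) :
    discRho P v x = Finset.univ.inf' ⟨j₀, Finset.mem_univ j₀⟩
      (fun j => polarRadius (P j) (v j) x) := by
  have : Nonempty (Fin N) := ⟨j₀⟩
  apply le_antisymm
  · obtain ⟨j, _, hj⟩ := Finset.exists_mem_eq_inf' ⟨j₀, Finset.mem_univ j₀⟩
      (fun j => polarRadius (P j) (v j) x)
    rw [hj]
    exact discRho_le P v x j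
  · exact le_ciInf fun j => Finset.inf'_le _ (Finset.mem_univ j)

theorem measurable_discRho {N : ℕ} (P : Fin N → E3) (v : Fin N → ℝ) (j₀ : Fin N) :
    Measurable (discRho P v) := by
  have : discRho P v = fun x => Finset.univ.inf' ⟨j₀, Finset.mem_univ j₀⟩
      (fun j => polarRadius (P j) (v j) x) := by
    funext x; exact discRho_eq_inf' P v x j₀
  rw [this]
  exact measurable_finset_inf' _ _ _ fun j => measurable_polarRadius (P j) (v j)

theorem discRho_mono {N : ℕ} (P : Fin N → E3) (v v' : Fin N → ℝ) (x : E3)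
    (h : ∀ j, polarRadius (P j) (v' j) x ≤ polarRadius (P j) (v j) x) :
    discRho P v' x ≤ discRho P v x :=
  ciInf_mono (Set.finite_range _).bddBelow h
theorem abs_sin_sub_sin_le (a b : ℝ) : |Real.sin a - Real.sin b| ≤ |a - b| := by
  rw [Real.sin_sub_sin]
  have h1 := Real.abs_sin_le_abs (x := (a-b)/2)
  have h2 := Real.abs_cos_le_one ((a+b)/2)
  have h3 := abs_nonneg (Real.sin ((a-b)/2))
  calc |2 * Real.sin ((a - b) / 2) * Real.cos ((a + b) / 2)|
      = 2 * |Real.sin ((a - b) / 2)| * |Real.cos ((a + b) / 2)| := by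
        rw [abs_mul, abs_mul]; norm_num
    _ ≤ 2 * |(a-b)/2| * 1 := by
        apply mul_le_mul _ h2 (abs_nonneg _) (by positivity)
        exact mul_le_mul_of_nonneg_left h1 (by norm_num)
    _ = |a - b| := by rw [abs_div]; ring_nf

theorem abs_cos_sub_cos_le (a b : ℝ) : |Real.cos a - Real.cos b| ≤ |a - b| := by
  have := abs_sin_sub_sin_le (a + Real.pi/2) (b + Real.pi/2)
  rw [Real.sin_add_pi_div_two, Real.sin_add_pi_div_two] at this
  simpa using this

theorem exists_cos_sin (a b r : ℝ) (hr : 0 ≤ r) (h : a^2 + b^2 = r^2) :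
    ∃ t, a = r * Real.cos t ∧ b = r * Real.sin t := by
  rcases hr.eq_or_lt with h0 | h0
  · refine ⟨0, ?_, ?_⟩ <;> rw [← h0] <;> nlinarith [sq_nonneg a, sq_nonneg b]
  · have habs : |a| ≤ r := by nlinarith [sq_abs a, abs_nonneg a, sq_nonneg b]
    have hab := abs_le.mp habs
    have ha1 : -1 ≤ a / r := by rw [le_div_iff₀ h0]; linarith
    have ha2 : a / r ≤ 1 := by rw [div_le_one h0]; linarith
    have hcos : Real.cos (Real.arccos (a/r)) = a / r := Real.cos_arccos ha1 ha2
    have h1ar : 1 - (a/r)^2 = (b/r)^2 := by field_simp; nlinarith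
    have hsin : Real.sin (Real.arccos (a/r)) = |b/r| := by
      rw [Real.sin_arccos, h1ar, Real.sqrt_sq_eq_abs]
    rcases le_or_gt 0 b with hb | hb
    · refine ⟨Real.arccos (a/r), ?_, ?_⟩
      · rw [hcos]; field_simp
      · rw [hsin, abs_of_nonneg (div_nonneg hb h0.le)]; field_simp
    · refine ⟨-Real.arccos (a/r), ?_, ?_⟩
      · rw [Real.cos_neg, hcos]; field_simp
      · rw [Real.sin_neg, hsin, abs_of_neg (div_neg_of_neg_of_pos hb h0)]
        field_simp
theorem euclid2_norm_sq (z : EuclideanSpace ℝ (Fin 2)) : ‖z‖^2 = z 0^2 + z 1^2 := by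
  rw [EuclideanSpace.norm_eq, Real.sq_sqrt (by positivity)]
  simp [Fin.sum_univ_two, Real.norm_eq_abs, sq_abs]

theorem euclid2_norm_le (z : EuclideanSpace ℝ (Fin 2)) : ‖z‖ ≤ |z 0| + |z 1| := by
  have h := euclid2_norm_sq z
  nlinarith [norm_nonneg z, abs_nonneg (z 0), abs_nonneg (z 1), sq_abs (z 0), sq_abs (z 1),
    mul_nonneg (abs_nonneg (z 0)) (abs_nonneg (z 1))]

theorem sphere_cap_null (u : E3) (hu : u ≠ 0) (c : ℝ) :
    μH[2] {x | x ∈ sphere2 ∧ rinner x u = c} = 0 := by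
  haveI : Fact (Module.finrank ℝ E3 = 2 + 1) := ⟨by simp [finrank_euclideanSpace_fin]⟩
  set W := (ℝ ∙ u)ᗮ with hW
  let b : OrthonormalBasis (Fin 2) ℝ W := OrthonormalBasis.fromOrthogonalSpanSingleton 2 hu
  let φ := b.repr
  have hu0 : (0:ℝ) < ‖u‖ := norm_pos_iff.mpr hu
  set c₀ : E3 := (c / ‖u‖^2) • u with hc₀
  set r : ℝ := Real.sqrt (1 - c^2/‖u‖^2) with hrdef
  have hr0 : 0 ≤ r := Real.sqrt_nonneg _
  set v : ℝ → EuclideanSpace ℝ (Fin 2) :=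
    fun t => (!₂[r * Real.cos t, r * Real.sin t] : EuclideanSpace ℝ (Fin 2)) with hv
  set G : ℝ → E3 := fun t => c₀ + (φ.symm (v t) : E3) with hG
  have hv0 : ∀ t, v t 0 = r * Real.cos t := fun t => rfl
  have hv1 : ∀ t, v t 1 = r * Real.sin t := fun t => rfl
  -- G is Lipschitz
  have hlip : LipschitzWith (Real.toNNReal (2*r)) G := by
    apply LipschitzWith.of_dist_le_mul
    intro t s
    have e1 : G t - G s = ((φ.symm (v t - v s)) : E3) := by
      simp only [hG, map_sub]
      push_cast
      abel
    rw [dist_eq_norm, e1]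
    have e2 : ‖((φ.symm (v t - v s)) : E3)‖ = ‖v t - v s‖ := by
      rw [Submodule.norm_coe]
      exact φ.symm.norm_map _
    rw [e2]
    refine le_trans (euclid2_norm_le _) ?_
    have hz0 : (v t - v s) 0 = r * Real.cos t - r * Real.cos s := rfl
    have hz1 : (v t - v s) 1 = r * Real.sin t - r * Real.sin s := rfl
    rw [hz0, hz1]
    have hc := abs_cos_sub_cos_le t s
    have hs := abs_sin_sub_sin_le t s
    have b1 : |r * Real.cos t - r * Real.cos s| ≤ r * |t - s| := by
      rw [show r * Real.cos t - r * Real.cos s = r * (Real.cos t - Real.cos s) by ring,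
        abs_mul, abs_of_nonneg hr0]
      exact mul_le_mul_of_nonneg_left hc hr0
    have b2 : |r * Real.sin t - r * Real.sin s| ≤ r * |t - s| := by
      rw [show r * Real.sin t - r * Real.sin s = r * (Real.sin t - Real.sin s) by ring,
        abs_mul, abs_of_nonneg hr0]
      exact mul_le_mul_of_nonneg_left hs hr0
    have e3 : (Real.toNNReal (2*r) : ℝ) * dist t s = 2 * r * |t - s| := by
      rw [Real.coe_toNNReal _ (by positivity), Real.dist_eq]
    rw [e3]
    linarith
  -- the set is contained in the range of G
  have hsub : {x | x ∈ sphere2 ∧ rinner x u = c} ⊆ G '' Set.univ := by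
    rintro x ⟨hx1, hx2⟩
    have hxn : ‖x‖ = 1 := by
      simpa [sphere2, mem_sphere_iff_norm] using hx1
    rw [rinner] at hx2
    have hux : (inner ℝ u x : ℝ) = c := by rw [real_inner_comm]; exact hx2
    set y : E3 := x - c₀ with hy
    have hyW : y ∈ W := by
      rw [hW, Submodule.mem_orthogonal_singleton_iff_inner_right, hy, inner_sub_right, hux,
        hc₀, real_inner_smul_right, real_inner_self_eq_norm_sq]
      field_simp
      ring
    have hy2 : ‖y‖^2 = 1 - c^2/‖u‖^2 := by
      rw [hy, norm_sub_sq_real, hxn, hc₀, real_inner_smul_right, hx2, norm_smul,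
        Real.norm_eq_abs, mul_pow, sq_abs]
      field_simp
      ring
    have hr2 : r^2 = 1 - c^2/‖u‖^2 := by
      rw [hrdef, Real.sq_sqrt (by rw [← hy2]; positivity)]
    set z : EuclideanSpace ℝ (Fin 2) := φ ⟨y, hyW⟩ with hz
    have hzn : ‖z‖ = ‖y‖ := by
      rw [hz, φ.norm_map]
      rfl
    have hab : (z 0)^2 + (z 1)^2 = r^2 := by
      rw [← euclid2_norm_sq, hzn, hy2, hr2]
    obtain ⟨t, ht1, ht2⟩ := exists_cos_sin (z 0) (z 1) r hr0 hab
    refine ⟨t, Set.mem_univ t, ?_⟩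
    have hvz : v t = z := by
      ext j
      fin_cases j
      · exact ht1.symm
      · exact ht2.symm
    rw [hG]
    simp only
    rw [hvz, hz, LinearIsometryEquiv.symm_apply_apply]
    have hcoe : ((⟨y, hyW⟩ : W) : E3) = y := rfl
    rw [hcoe, hy]
    abel
  -- conclude via Hausdorff dimension
  have hdim : dimH {x | x ∈ sphere2 ∧ rinner x u = c} ≤ 1 := by
    refine le_trans (dimH_mono hsub) ?_
    refine le_trans (hlip.dimH_image_le (Set.univ : Set ℝ)) ?_
    exact le_of_eq Real.dimH_univ
  have hlt : dimH {x | x ∈ sphere2 ∧ rinner x u = c} < ((2 : NNReal) : ENNReal) := by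
    refine lt_of_le_of_lt hdim ?_
    norm_num
  have h0 := hausdorffMeasure_of_dimH_lt hlt
  simpa using h0
theorem smul_axisDir (P : E3) (hP : P ≠ 0) : ‖P‖ • axisDir P = P := by
  rw [axisDir, smul_smul, mul_inv_cancel₀ (norm_ne_zero_iff.mpr hP), one_smul]

theorem coincide_iff (P₁ P₂ : E3) (d₁ d₂ : ℝ) (h1 : P₁ ≠ 0) (h2 : P₂ ≠ 0)
    (hd1 : 0 < d₁) (hd2 : 0 < d₂) (x : E3) (hx : ‖x‖ = 1) :
    (polarRadius P₁ d₁ x = polarRadius P₂ d₂ x ↔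
      rinner x ((d₂ * ecc P₁ d₁) • axisDir P₁ - (d₁ * ecc P₂ d₂) • axisDir P₂) = d₂ - d₁) := by
  have hD1 := denom_pos P₁ d₁ x h1 hd1 hx
  have hD2 := denom_pos P₂ d₂ x h2 hd2 hx
  rw [polarRadius, polarRadius]
  simp only [rinner] at hD1 hD2 ⊢
  rw [div_eq_div_iff hD1.ne' hD2.ne']
  simp only [inner_sub_right, real_inner_smul_right]
  constructor <;> intro h <;> nlinarith [h]

theorem coincide_null (P₁ P₂ : E3) (d₁ d₂ : ℝ) (h1 : P₁ ≠ 0) (h2 : P₂ ≠ 0) (hne : P₁ ≠ P₂)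
    (hd1 : 0 < d₁) (hd2 : 0 < d₂) :
    μH[2] {x | x ∈ sphere2 ∧ polarRadius P₁ d₁ x = polarRadius P₂ d₂ x} = 0 := by
  set u : E3 := (d₂ * ecc P₁ d₁) • axisDir P₁ - (d₁ * ecc P₂ d₂) • axisDir P₂ with hudef
  have hxnorm : ∀ x, x ∈ sphere2 → ‖x‖ = 1 := by
    intro x hx
    simpa [sphere2, mem_sphere_iff_norm] using hx
  by_cases hu0 : u = 0
  · -- degenerate case: necessarily d₁ ≠ d₂, and the set is empty
    have he : (d₂ * ecc P₁ d₁) • axisDir P₁ = (d₁ * ecc P₂ d₂) • axisDir P₂ := by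
      rwa [sub_eq_zero] at hu0
    have hn : d₂ * ecc P₁ d₁ = d₁ * ecc P₂ d₂ := by
      have := congrArg norm he
      rw [norm_smul, norm_smul, norm_axisDir P₁ h1, norm_axisDir P₂ h2, mul_one, mul_one,
        Real.norm_eq_abs, Real.norm_eq_abs,
        abs_of_pos (mul_pos hd2 (ecc_pos P₁ d₁ h1 hd1)),
        abs_of_pos (mul_pos hd1 (ecc_pos P₂ d₂ h2 hd2))] at this
      exact this
    have hm : axisDir P₁ = axisDir P₂ := by
      rw [hn] at he
      exact smul_right_injective E3 (ne_of_gt (mul_pos hd1 (ecc_pos P₂ d₂ h2 hd2))) he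
    have hdne : d₁ ≠ d₂ := by
      intro hdd
      -- then ecc equal, hence norms equal, hence P₁ = P₂
      subst hdd
      have hecc : ecc P₁ d₁ = ecc P₂ d₁ := mul_left_cancel₀ hd1.ne' hn
      have hi1 := ecc_identity P₁ d₁ h1 hd1
      have hi2 := ecc_identity P₂ d₁ h2 hd2
      rw [hecc] at hi1
      have hr1 : 0 < ‖P₁‖ := norm_pos_iff.mpr h1
      have hr2 : 0 < ‖P₂‖ := norm_pos_iff.mpr h2
      have hep : 0 < ecc P₂ d₁ := by
        rw [← hecc]; exact ecc_pos P₁ d₁ h1 hd1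
      have hnorm_eq : ‖P₁‖ = ‖P₂‖ := by
        have e1 : 2 * ecc P₂ d₁ * (d₁ / ‖P₁‖) = 2 * ecc P₂ d₁ * (d₁ / ‖P₂‖) := by
          linarith
        have e2 : d₁ / ‖P₁‖ = d₁ / ‖P₂‖ := by
          have h2e : (0:ℝ) < 2 * ecc P₂ d₁ := by linarith
          exact mul_left_cancel₀ (ne_of_gt h2e) e1
        field_simp at e2
        linarith
      apply hne
      rw [← smul_axisDir P₁ h1, ← smul_axisDir P₂ h2, hm, hnorm_eq]
    have hempty : {x | x ∈ sphere2 ∧ polarRadius P₁ d₁ x = polarRadius P₂ d₂ x} = ∅ := by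
      ext x
      simp only [Set.mem_setOf_eq, Set.mem_empty_iff_false, iff_false]
      rintro ⟨hxs, hxe⟩
      have := (coincide_iff P₁ P₂ d₁ d₂ h1 h2 hd1 hd2 x (hxnorm x hxs)).mp hxe
      rw [← hudef, hu0] at this
      simp [rinner] at this
      exact hdne (by linarith)
    rw [hempty]
    exact measure_empty
  · apply measure_mono_null _ (sphere_cap_null u hu0 (d₂ - d₁))
    rintro x ⟨hxs, hxe⟩
    exact ⟨hxs, (coincide_iff P₁ P₂ d₁ d₂ h1 h2 hd1 hd2 x (hxnorm x hxs)).mp hxe⟩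

theorem pairwise_null {N : ℕ} (P : Fin N → E3) (hP : ∀ i, P i ≠ 0)
    (hPinj : Function.Injective P) (v : Fin N → ℝ) (hv : ∀ i, 0 < v i) :
    μH[2] (⋃ (j : Fin N) (k : Fin N) (_ : j ≠ k),
      {x | x ∈ sphere2 ∧ polarRadius (P j) (v j) x = polarRadius (P k) (v k) x}) = 0 := by
  refine measure_iUnion_null fun j => measure_iUnion_null fun k => measure_iUnion_null fun hjk =>
    coincide_null (P j) (P k) (v j) (v k) (hP j) (hP k) ?_ (hv j) (hv k)
  exact fun h => hjk (hPinj h)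
/-- Monotonicity: decreasing the single entry `d_l` of `w` does not
increase the reflector measure of any other target point `P_i`, `i ≠ l`. -/
theorem discrete_measure_monotone_in_single_focal_parameter
    (Ω : Set E3) (hΩ : Ω ⊆ sphere2) (hfr : μH[2] (sphFrontier Ω) = 0)
    (N : ℕ) (P : Fin N → E3) (hP : ∀ i, P i ≠ 0) (hPinj : Function.Injective P)
    (w wt : Fin N → ℝ) (hw : ∀ i, 0 < w i) (hwt : ∀ i, 0 < wt i)
    (l : Fin N) (hl : wt l ≤ w l) (hoth : ∀ i, i ≠ l → wt i = w i)
    (f : E3 → ℝ) (hf0 : ∀ x ∈ closure Ω, 0 ≤ f x)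
    (hfi : IntegrableOn f (closure Ω) μH[2]) :
    ∀ i, i ≠ l → discMu Ω P wt f {i} ≤ discMu Ω P w f {i} := by
  intro i hi
  have hclΩ : closure Ω ⊆ sphere2 := closure_minimal hΩ Metric.isClosed_sphere
  have hsphx : ∀ x ∈ closure Ω, ‖x‖ = 1 := by
    intro x hx
    simpa [sphere2, mem_sphere_iff_norm] using hclΩ hx
  have hwtle : ∀ (j : Fin N) (x : E3), ‖x‖ = 1 →
      polarRadius (P j) (wt j) x ≤ polarRadius (P j) (w j) x := by
    intro j x hx
    rcases eq_or_ne j l with rfl | hj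
    · exact polarRadius_mono (P j) (w j) (wt j) x (hP j) (hwt j) hl hx
    · rw [hoth j hj]
  -- membership characterization of the tracing sets
  have hmem : ∀ (v : Fin N → ℝ) (x : E3), x ∈ discTracing Ω P v {i} ↔
      (x ∈ closure Ω ∧ discRho P v x = polarRadius (P i) (v i) x) := by
    intro v x
    constructor
    · rintro ⟨h1, j, hj, hje⟩
      rw [Set.mem_singleton_iff] at hj
      subst hj
      exact ⟨h1, hje⟩
    · rintro ⟨h1, h2⟩
      exact ⟨h1, i, Set.mem_singleton i, h2⟩
  -- A ⊆ B
  have hsubAB : discTracing Ω P wt {i} ⊆ discTracing Ω P w {i} := by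
    intro x hx
    obtain ⟨hxc, hxe⟩ := (hmem wt x).mp hx
    have hx1 := hsphx x hxc
    refine (hmem w x).mpr ⟨hxc, le_antisymm (discRho_le P w x i) ?_⟩
    calc polarRadius (P i) (w i) x = polarRadius (P i) (wt i) x := by rw [hoth i hi]
      _ = discRho P wt x := hxe.symm
      _ ≤ discRho P w x := discRho_mono P w wt x (fun j => hwtle j x hx1)
  -- measurability of the tracing sets
  have hmT : ∀ (v : Fin N → ℝ), MeasurableSet (discTracing Ω P v {i}) := by
    intro v
    have heq : discTracing Ω P v {i} = closure Ω ∩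
        ((fun x => discRho P v x - polarRadius (P i) (v i) x) ⁻¹' {0}) := by
      ext x
      rw [hmem v x]
      simp [sub_eq_zero]
    rw [heq]
    exact isClosed_closure.measurableSet.inter
      (((measurable_discRho P v i).sub (measurable_polarRadius (P i) (v i)))
        (measurableSet_singleton 0))
  -- the comparison integrand
  set g : E3 → ℝ := fun x =>
    f x * rinner x (normalVec (P i) (w i) x) / polarRadius (P i) (w i) x ^ 2 with hgdef
  -- a.e. equality of the discrete integrand with g on the tracing set
  have hcongr : ∀ (v : Fin N → ℝ), (∀ j, 0 < v j) → v i = w i →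
      ∫ x in discTracing Ω P v {i},
        f x * rinner x (discNu P v x) / discRho P v x ^ 2 ∂μH[2]
      = ∫ x in discTracing Ω P v {i}, g x ∂μH[2] := by
    intro v hv hvi
    apply setIntegral_congr_ae (hmT v)
    have hZ : μH[2] (⋃ (j : Fin N) (k : Fin N) (_ : j ≠ k),
        {x | x ∈ sphere2 ∧ polarRadius (P j) (v j) x = polarRadius (P k) (v k) x}) = 0 :=
      pairwise_null P hP hPinj v hv
    have hae : ∀ᵐ x ∂(μH[2] : Measure E3), x ∉ (⋃ (j : Fin N) (k : Fin N) (_ : j ≠ k),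
        {x | x ∈ sphere2 ∧ polarRadius (P j) (v j) x = polarRadius (P k) (v k) x}) := by
      exact measure_eq_zero_iff_ae_notMem.mp hZ
    filter_upwards [hae] with x hxZ hxA
    obtain ⟨hxc, hxe⟩ := (hmem v x).mp hxA
    have hx1 := hsphx x hxc
    have hex : ∃ j, discRho P v x = polarRadius (P j) (v j) x := ⟨i, hxe⟩
    have hji : hex.choose = i := by
      by_contra hne
      apply hxZ
      refine Set.mem_iUnion.mpr ⟨hex.choose, Set.mem_iUnion.mpr ⟨i,
        Set.mem_iUnion.mpr ⟨hne, ⟨hclΩ hxc, ?_⟩⟩⟩⟩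
      exact hex.choose_spec.symm.trans hxe
    rw [discNu, dif_pos hex, hji, hxe, hvi]
  -- nonnegativity of g on the w-tracing set
  have hgnn : 0 ≤ᵐ[(μH[2] : Measure E3).restrict (discTracing Ω P w {i})] g := by
    rw [EventuallyLE, ae_restrict_iff' (hmT w)]
    apply Eventually.of_forall
    intro x hx
    obtain ⟨hxc, _⟩ := (hmem w x).mp hx
    have hx1 := hsphx x hxc
    simp only [hgdef, Pi.zero_apply]
    exact div_nonneg (mul_nonneg (hf0 x hxc)
      (rinner_normalVec_nonneg (P i) (w i) x (hP i) (hw i) hx1)) (by positivity)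
  -- integrability of g on the w-tracing set
  have hBsub : discTracing Ω P w {i} ⊆ closure Ω := fun x hx => ((hmem w x).mp hx).1
  have hgint : IntegrableOn g (discTracing Ω P w {i}) μH[2] := by
    have hmc : Measurable (fun x =>
        rinner x (normalVec (P i) (w i) x) / polarRadius (P i) (w i) x ^ 2) :=
      (measurable_rinner_normalVec (P i) (w i)).div
        ((measurable_polarRadius (P i) (w i)).pow_const 2)
    have hgeq : g = fun x => f x *
        (rinner x (normalVec (P i) (w i) x) / polarRadius (P i) (w i) x ^ 2) := by
      funext x
      exact mul_div_assoc _ _ _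
    have haesm : AEStronglyMeasurable g ((μH[2] : Measure E3).restrict (discTracing Ω P w {i})) := by
      rw [hgeq]
      exact ((hfi.aestronglyMeasurable).mono_measure
        (Measure.restrict_mono hBsub le_rfl)).mul hmc.aestronglyMeasurable
    have hGint : Integrable (fun x => |f x| * (4 / (w i)^2))
        ((μH[2] : Measure E3).restrict (discTracing Ω P w {i})) :=
      ((hfi.mono_set hBsub).abs).mul_const _
    refine hGint.mono' haesm ?_
    rw [ae_restrict_iff' (hmT w)]
    apply Eventually.of_forall
    intro x hx
    obtain ⟨hxc, _⟩ := (hmem w x).mp hx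
    have hx1 := hsphx x hxc
    have h1 : |rinner x (normalVec (P i) (w i) x)| ≤ 1 :=
      abs_rinner_normalVec_le_one (P i) (w i) x hx1
    have h2 : 0 < polarRadius (P i) (w i) x := polarRadius_pos (P i) (w i) x (hP i) (hw i) hx1
    have h3 : w i / 2 < polarRadius (P i) (w i) x :=
      polarRadius_half (P i) (w i) x (hP i) (hw i) hx1
    have hwi : 0 < w i := hw i
    have hc : |rinner x (normalVec (P i) (w i) x) / polarRadius (P i) (w i) x ^ 2|
        ≤ 4 / (w i)^2 := by
      rw [abs_div, abs_of_pos (by positivity : (0:ℝ) < polarRadius (P i) (w i) x ^ 2),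
        div_le_div_iff₀ (by positivity) (by positivity)]
      nlinarith [abs_nonneg (rinner x (normalVec (P i) (w i) x))]
    calc ‖g x‖ = |f x| * |rinner x (normalVec (P i) (w i) x)
          / polarRadius (P i) (w i) x ^ 2| := by
          show ‖f x * rinner x (normalVec (P i) (w i) x)
            / polarRadius (P i) (w i) x ^ 2‖ = _
          rw [Real.norm_eq_abs, mul_div_assoc, abs_mul]
      _ ≤ |f x| * (4 / (w i)^2) := mul_le_mul_of_nonneg_left hc (abs_nonneg _)
  -- conclude
  rw [discMu, discMu, hcongr wt hwt (hoth i hi), hcongr w hw rfl]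
  exact setIntegral_mono_set hgint hgnn hsubAB.eventuallyLE
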